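/- Let V be a finite-dimensional complex vector space and 𝔤 ⊆ End(V) a Lie subalgebra acting irreducibly on V which is a skew-Berger algebra. Suppose 𝔤 annihilates 𝓡̄(𝔤), i.e. for every A ∈ 𝔤, every R ∈ 𝓡̄(𝔤) and all x, y ∈ V one has [A, R(x,y)] = R(Ax, y) + R(x, Ay). Then 𝓡̄^∇(𝔤) = 0, where 𝓡̄^∇(𝔤) is the space of trilinear maps S : V × V × V → End(V), written (x, y, z) ↦ S_x(y,z), such that for each fixed x the map S_x is a skew-curvature tensor of type 𝔤 and S_x(y,z) + S_y(z,x) + S_z(x,y) = 0 for all x, y, z ∈ V. (That is, 𝔤 is a symmetric skew-Berger algebra.) -/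

import Mathlib

/-- A skew-curvature tensor of type `h`. -/
def IsSkewCurv {V : Type*} [AddCommGroup V] [Module ℂ V]
    (h : Submodule ℂ (Module.End ℂ V)) (R : V →ₗ[ℂ] V →ₗ[ℂ] Module.End ℂ V) : Prop :=
  (∀ x y, R x y = R y x) ∧ (∀ x y, R x y ∈ h) ∧
  (∀ x y z, R x y z + R y z x + R z x y = 0)

/-- `h` is a skew-Berger algebra. -/
def IsSkewBerger {V : Type*} [AddCommGroup V] [Module ℂ V]
    (h : Submodule ℂ (Module.End ℂ V)) : Prop :=
  h = Submodule.span ℂ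
    {T | ∃ R : V →ₗ[ℂ] V →ₗ[ℂ] Module.End ℂ V,
      IsSkewCurv h R ∧ ∃ x y : V, T = R x y}

attribute [local instance 100] LieRing.ofAssociativeRing

/-- an irreducible skew-Berger algebra `𝔤 ⊆ End(V)` annihilating
`𝓡̄(𝔤)` is a symmetric skew-Berger algebra, i.e. `𝓡̄^∇(𝔤) = 0`: every trilinear
`S : V×V×V → End(V)` such that each `S_x` is a skew-curvature tensor of type `𝔤` and
`S_x(y,z) + S_y(z,x) + S_z(x,y) = 0` vanishes. -/
theorem stmt17 {V : Type*} [AddCommGroup V] [Module ℂ V] [FiniteDimensional ℂ V]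
    (g : LieSubalgebra ℂ (Module.End ℂ V))
    (hirr : ∀ W : Submodule ℂ V, (∀ A ∈ g, ∀ w ∈ W, A w ∈ W) → W = ⊥ ∨ W = ⊤)
    (hBerger : IsSkewBerger g.toSubmodule)
    (hann : ∀ A ∈ g, ∀ R : V →ₗ[ℂ] V →ₗ[ℂ] Module.End ℂ V,
      IsSkewCurv g.toSubmodule R →
      ∀ x y : V, ⁅A, R x y⁆ = R (A x) y + R x (A y)) :
    ∀ S : V →ₗ[ℂ] V →ₗ[ℂ] V →ₗ[ℂ] Module.End ℂ V,
      (∀ x : V, IsSkewCurv g.toSubmodule (S x)) →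
      (∀ x y z : V, S x y z + S y z x + S z x y = 0) →
      S = 0 := by
  intro S hS hcyc
  set Φ : Module.End ℂ V → Prop :=
    fun P => ∀ x y z : V, S (P x) y z + S (P y) z x + S (P z) x y = 0 with hΦ
  have key : ∀ P : Module.End ℂ V, Φ P → ∀ B ∈ g, Φ (P * B) := by
    intro P hP B hB x y z
    have e1 := hP (B x) y z
    have e2 := hP (B y) z x
    have e3 := hP (B z) x y
    have a1 := hann B hB (S (P x)) (hS (P x)) y z
    have a2 := hann B hB (S (P y)) (hS (P y)) z x
    have a3 := hann B hB (S (P z)) (hS (P z)) x y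
    have h0 : ⁅B, S (P x) y z + S (P y) z x + S (P z) x y⁆ = (0 : Module.End ℂ V) := by
      rw [hP x y z]; exact lie_zero B
    have expand : ⁅B, S (P x) y z + S (P y) z x + S (P z) x y⁆
        = ⁅B, S (P x) y z⁆ + ⁅B, S (P y) z x⁆ + ⁅B, S (P z) x y⁆ := by
      simp [lie_add]
    have hsum : (S (P x) (B y) z + S (P x) y (B z)) + (S (P y) (B z) x + S (P y) z (B x))
        + (S (P z) (B x) y + S (P z) x (B y)) = 0 := by
      rw [← a1, ← a2, ← a3, ← expand, h0]
    have goal_eq : S ((P * B) x) y z + S ((P * B) y) z x + S ((P * B) z) x y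
        = (S (P (B x)) y z + S (P y) z (B x) + S (P z) (B x) y)
          + (S (P (B y)) z x + S (P z) x (B y) + S (P x) (B y) z)
          + (S (P (B z)) x y + S (P x) y (B z) + S (P y) (B z) x)
          - ((S (P x) (B y) z + S (P x) y (B z)) + (S (P y) (B z) x + S (P y) z (B x))
            + (S (P z) (B x) y + S (P z) x (B y))) := by
      simp only [Module.End.mul_apply]
      abel
    rw [goal_eq, e1, e2, e3, hsum]
    abel
  have hadj : ∀ P ∈ Algebra.adjoin ℂ (g : Set (Module.End ℂ V)), Φ P := by
    intro P hPmem
    have Ψ : ∀ Q, Φ Q → Φ (Q * P) := by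
      induction hPmem using Algebra.adjoin_induction with
      | mem B hB => exact fun Q hQ => key Q hQ B hB
      | algebraMap r =>
          intro Q hQ x y z
          have hv : ∀ v : V, (Q * algebraMap ℂ (Module.End ℂ V) r) v = r • (Q v) := by
            intro v
            simp [Module.End.mul_apply, Algebra.algebraMap_eq_smul_one, LinearMap.smul_apply,
              map_smul]
          simp only [hv, map_smul, LinearMap.smul_apply]
          rw [← smul_add, ← smul_add, hQ x y z, smul_zero]
      | add a b _ _ ha hb =>
          intro Q hQ x y z
          have h1 := ha Q hQ x y z
          have h2 := hb Q hQ x y z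
          have hv : ∀ v : V, (Q * (a + b)) v = (Q * a) v + (Q * b) v := by
            intro v; simp [Module.End.mul_apply, map_add]
          calc S ((Q * (a + b)) x) y z + S ((Q * (a + b)) y) z x + S ((Q * (a + b)) z) x y
              = (S ((Q * a) x) y z + S ((Q * a) y) z x + S ((Q * a) z) x y)
                + (S ((Q * b) x) y z + S ((Q * b) y) z x + S ((Q * b) z) x y) := by
                simp only [hv, map_add, LinearMap.add_apply]; abel
            _ = 0 := by rw [h1, h2, add_zero]
      | mul a b _ _ ha hb =>
          intro Q hQ
          have h2 : Φ ((Q * a) * b) := hb (Q * a) (ha Q hQ)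
          rwa [mul_assoc] at h2
    have hone : Φ 1 := by
      intro x y z
      simpa using hcyc x y z
    have h1 := Ψ 1 hone
    rwa [one_mul] at h1
  have hvv : ∀ u w : V, S u w w = 0 := by
    intro u w
    rcases eq_or_ne w 0 with rfl | hw
    · simp
    · set 𝒜 := Algebra.adjoin ℂ (g : Set (Module.End ℂ V)) with h𝒜
      set W : Submodule ℂ V := Submodule.map (LinearMap.applyₗ w) (Subalgebra.toSubmodule 𝒜)
        with hW
      have hWinv : ∀ A ∈ g, ∀ v ∈ W, A v ∈ W := by
        rintro A hA v hv
        rcases Submodule.mem_map.mp hv with ⟨P, hP, rfl⟩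
        refine Submodule.mem_map.mpr ⟨A * P, ?_, rfl⟩
        exact (Subalgebra.mem_toSubmodule _).mpr
          (mul_mem (Algebra.subset_adjoin hA) ((Subalgebra.mem_toSubmodule _).mp hP))
      have hwW : w ∈ W :=
        Submodule.mem_map.mpr ⟨1, (Subalgebra.mem_toSubmodule _).mpr (one_mem 𝒜), rfl⟩
      have hWtop : W = ⊤ := by
        rcases hirr W hWinv with h | h
        · exact absurd (h ▸ hwW) (by simpa using hw)
        · exact h
      have hu : u ∈ W := hWtop ▸ Submodule.mem_top
      rcases Submodule.mem_map.mp hu with ⟨P, hP, hPw⟩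
      have hPw' : P w = u := hPw
      have h3 := hadj P ((Subalgebra.mem_toSubmodule _).mp hP) w w w
      rw [hPw'] at h3
      have h3' : (3 : ℂ) • S u w w = 0 := by
        have e : (3 : ℂ) • S u w w = S u w w + S u w w + S u w w := by module
        rw [e]; exact h3
      rcases smul_eq_zero.mp h3' with h | h
      · norm_num at h
      · exact h
  have hzero : ∀ u y z : V, S u y z = 0 := by
    intro u y z
    have hsym := (hS u).1 y z
    have h := hvv u (y + z)
    simp only [map_add, LinearMap.add_apply, hvv u y, hvv u z] at h
    have hyz : S u y z + S u z y = 0 := by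
      calc S u y z + S u z y = 0 + S u z y + (S u y z + 0) := by abel
        _ = 0 := h
    have h2 : (2 : ℂ) • S u y z = 0 := by
      have e : (2 : ℂ) • S u y z = S u y z + S u z y := by rw [← hsym]; module
      rw [e]; exact hyz
    rcases smul_eq_zero.mp h2 with h' | h'
    · norm_num at h'
    · exact h'
  ext u y z : 3
  simpa using hzero u y z
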